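/- Let λ > 0, γ_0 > 0, Δ ∈ ℝ, set δ := λ − iΔ ∈ ℂ, and let d ∈ ℂ with d² = δ² − 2γ_0 λ and d ≠ 0. Fix c_0 ∈ ℂ and define c : ℝ → ℂ by c(t) := c_0 · e^{−δ t/2} · ( cosh(dt/2) + (δ/d) sinh(dt/2) ). Then for every t ≥ 0, c'(t) = −∫_0^t (γ_0 λ / 2) e^{−δ (t−τ)} c(τ) dτ, and c(0) = c_0. -/

import Mathlib

open Complex

theorem stmt_13 (lam γ₀ Δ : ℝ) (hlam : 0 < lam) (hγ₀ : 0 < γ₀)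
    (δ : ℂ) (hδ : δ = (lam : ℂ) - Complex.I * (Δ : ℂ))
    (d : ℂ) (hd2 : d ^ 2 = δ ^ 2 - 2 * (γ₀ : ℂ) * (lam : ℂ)) (hd : d ≠ 0)
    (c₀ : ℂ) (c : ℝ → ℂ)
    (hc : ∀ t : ℝ, c t = c₀ * Complex.exp (-δ * (t : ℂ) / 2) *
      (Complex.cosh (d * (t : ℂ) / 2) + (δ / d) * Complex.sinh (d * (t : ℂ) / 2))) :
    c 0 = c₀ ∧
    ∀ t : ℝ, 0 ≤ t →
      HasDerivAt c
        (-(∫ τ in (0 : ℝ)..t,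
            ((γ₀ : ℂ) * (lam : ℂ) / 2) * Complex.exp (-δ * ((t : ℂ) - (τ : ℂ))) * c τ)) t := by
  have hcf : c = fun t : ℝ => c₀ * Complex.exp (-δ * (t : ℂ) / 2) *
      (Complex.cosh (d * (t : ℂ) / 2) + (δ / d) * Complex.sinh (d * (t : ℂ) / 2)) :=
    funext hc
  constructor
  · rw [hc 0]; simp
  · intro t ht
    -- derivative of c at t
    have hder : HasDerivAt c
        (-((γ₀ : ℂ) * (lam : ℂ) * c₀ / d * Complex.exp (-δ * (t : ℂ) / 2) *
          Complex.sinh (d * (t : ℂ) / 2))) t := by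
      have hg : ∀ z : ℂ, HasDerivAt (fun z : ℂ => c₀ * Complex.exp (-δ * z / 2) *
          (Complex.cosh (d * z / 2) + (δ / d) * Complex.sinh (d * z / 2)))
          (-((γ₀ : ℂ) * (lam : ℂ) * c₀ / d * Complex.exp (-δ * z / 2) *
            Complex.sinh (d * z / 2))) z := by
        intro z
        have h1 : HasDerivAt (fun z : ℂ => -δ * z / 2) (-δ / 2) z := by
          simpa using ((hasDerivAt_id z).const_mul (-δ)).div_const 2
        have h2 : HasDerivAt (fun z : ℂ => d * z / 2) (d / 2) z := by
          simpa using ((hasDerivAt_id z).const_mul d).div_const 2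
        have he := h1.cexp
        have hC := h2.ccosh
        have hS := h2.csinh
        have key := (he.const_mul c₀).mul (hC.add (hS.const_mul (δ / d)))
        convert key using 1
        · rfl
        · rfl
        · rfl
        simp only [Pi.add_apply]
        set E := Complex.exp (-δ * z / 2) with hE
        set S := Complex.sinh (d * z / 2) with hS'
        set C := Complex.cosh (d * z / 2) with hC'
        field_simp
        ring_nf
        linear_combination (-c₀ * E * S) * hd2
      rw [hcf]
      exact (hg (t : ℂ)).comp_ofReal
    -- compute the integral
    have hint : (∫ τ in (0 : ℝ)..t,
        ((γ₀ : ℂ) * (lam : ℂ) / 2) * Complex.exp (-δ * ((t : ℂ) - (τ : ℂ))) * c τ)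
        = (γ₀ : ℂ) * (lam : ℂ) * c₀ / d * Complex.exp (-δ * (t : ℂ) / 2) *
          Complex.sinh (d * (t : ℂ) / 2) := by
      have hG : ∀ τ : ℝ, HasDerivAt (fun τ : ℝ =>
          (γ₀ : ℂ) * (lam : ℂ) * c₀ / d * Complex.exp (-δ * (t : ℂ)) *
            Complex.exp (δ * (τ : ℂ) / 2) * Complex.sinh (d * (τ : ℂ) / 2))
          (((γ₀ : ℂ) * (lam : ℂ) / 2) * Complex.exp (-δ * ((t : ℂ) - (τ : ℂ))) * c τ) τ := by
        intro τ
        set K : ℂ := (γ₀ : ℂ) * (lam : ℂ) * c₀ / d * Complex.exp (-δ * (t : ℂ)) with hK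
        have h1 : HasDerivAt (fun z : ℂ => δ * z / 2) (δ / 2) (τ : ℂ) := by
          simpa using ((hasDerivAt_id (τ : ℂ)).const_mul δ).div_const 2
        have h2 : HasDerivAt (fun z : ℂ => d * z / 2) (d / 2) (τ : ℂ) := by
          simpa using ((hasDerivAt_id (τ : ℂ)).const_mul d).div_const 2
        have key := (((h1.cexp.const_mul K).mul h2.csinh).comp_ofReal :
          HasDerivAt (fun y : ℝ => K * Complex.exp (δ * (y : ℂ) / 2) *
            Complex.sinh (d * (y : ℂ) / 2)) _ τ)
        convert key using 1
        · rfl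
        rw [hc τ, hK]
        have hexp : Complex.exp (-δ * ((t : ℂ) - (τ : ℂ))) * Complex.exp (-δ * (τ : ℂ) / 2)
            = Complex.exp (-δ * (t : ℂ)) * Complex.exp (δ * (τ : ℂ) / 2) := by
          rw [← Complex.exp_add, ← Complex.exp_add]; ring_nf
        set E1 := Complex.exp (-δ * ((t : ℂ) - (τ : ℂ))) with hE1
        set E2 := Complex.exp (-δ * (τ : ℂ) / 2) with hE2
        set E3 := Complex.exp (-δ * (t : ℂ)) with hE3
        set E4 := Complex.exp (δ * (τ : ℂ) / 2) with hE4
        set S := Complex.sinh (d * (τ : ℂ) / 2) with hS'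
        set C := Complex.cosh (d * (τ : ℂ) / 2) with hC'
        field_simp
        ring_nf
        linear_combination ((γ₀ : ℂ) * (lam : ℂ) * c₀ * (C * d + δ * S)) * hexp
      rw [intervalIntegral.integral_eq_sub_of_hasDerivAt (fun τ _ => hG τ) ?_]
      · have hE : Complex.exp (-δ * (t : ℂ)) * Complex.exp (δ * (t : ℂ) / 2)
            = Complex.exp (-δ * (t : ℂ) / 2) := by
          rw [← Complex.exp_add]; congr 1; ring
        simp only [Complex.ofReal_zero, mul_zero, zero_div, Complex.sinh_zero, mul_zero,
          Complex.exp_zero, sub_zero]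
        linear_combination ((γ₀ : ℂ) * (lam : ℂ) * c₀ / d * Complex.sinh (d * (t : ℂ) / 2)) * hE
      · apply Continuous.intervalIntegrable
        rw [hcf]
        fun_prop
    rw [hint]
    exact hder
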